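/- For D̃4 with Coxeter maps c• and c∘ as above, every positive root v with L(v) = v_1+v_2+v_3+v_4−2v_0 ≠ 0 eventually leaves the positive cone under iteration of the appropriate Coxeter map: there exists a finite alternating composition of c• and c∘ carrying v to a coordinate vector e_g for some vertex g; equivalently, for the Coxeter transformation c = c∘c•, there exists t ∈ ℤ with c^t(v) not ≥ 0 componentwise (v is singular). -/
import Mathlib


/-- Tits form of D̃₄, coordinates (v₁,v₂,v₃,v₄,v₀): leaves 0,1,2,3, center 4. -/
def qD4 (x : Fin 5 → ℤ) : ℤ :=
  (∑ i, x i ^ 2) - x 4 * (x 0 + x 1 + x 2 + x 3)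

/-- c• : vᵢ ↦ −vᵢ + v₀ simultaneously at the four leaves. -/
def cBulletD4 (x : Fin 5 → ℤ) : Fin 5 → ℤ :=
  ![x 4 - x 0, x 4 - x 1, x 4 - x 2, x 4 - x 3, x 4]

/-- c∘ : v₀ ↦ −v₀ + v₁+v₂+v₃+v₄ at the center. -/
def cCircD4 (x : Fin 5 → ℤ) : Fin 5 → ℤ :=
  ![x 0, x 1, x 2, x 3, x 0 + x 1 + x 2 + x 3 - x 4]

/-- Finite alternating compositions of c• (true) and c∘ (false). -/
def applyWordD4 : List Bool → (Fin 5 → ℤ) → (Fin 5 → ℤ)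
  | [], x => x
  | b :: w, x => (if b then cBulletD4 else cCircD4) (applyWordD4 w x)

/-- Coxeter transformation c = c∘ c• and its inverse c⁻¹ = c• c∘. -/
def cD4 : (Fin 5 → ℤ) → (Fin 5 → ℤ) := cCircD4 ∘ cBulletD4
def cInvD4 : (Fin 5 → ℤ) → (Fin 5 → ℤ) := cBulletD4 ∘ cCircD4

/-- sum of coordinates -/
def SD4 (x : Fin 5 → ℤ) : ℤ := x 0 + x 1 + x 2 + x 3 + x 4
/-- linear defect -/
def LD4 (x : Fin 5 → ℤ) : ℤ := x 0 + x 1 + x 2 + x 3 - 2 * x 4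

lemma q_bullet (x : Fin 5 → ℤ) : qD4 (cBulletD4 x) = qD4 x := by
  simp [qD4, cBulletD4, Fin.sum_univ_five]; ring

lemma q_circ (x : Fin 5 → ℤ) : qD4 (cCircD4 x) = qD4 x := by
  simp [qD4, cCircD4, Fin.sum_univ_five]; ring

lemma L_c (x : Fin 5 → ℤ) : LD4 (cD4 x) = LD4 x := by
  simp [LD4, cD4, cCircD4, cBulletD4, Function.comp]; ring

lemma L_cInv (x : Fin 5 → ℤ) : LD4 (cInvD4 x) = LD4 x := by
  simp [LD4, cInvD4, cCircD4, cBulletD4, Function.comp]; ring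

lemma S_c (x : Fin 5 → ℤ) (h : 0 < LD4 x) : SD4 (cD4 x) < SD4 x := by
  simp only [LD4] at h
  simp only [SD4, cD4, cCircD4, cBulletD4, Function.comp]
  show (x 4 - x 0) + (x 4 - x 1) + (x 4 - x 2) + (x 4 - x 3) +
      ((x 4 - x 0) + (x 4 - x 1) + (x 4 - x 2) + (x 4 - x 3) - x 4) <
      x 0 + x 1 + x 2 + x 3 + x 4
  linarith

lemma S_cInv (x : Fin 5 → ℤ) (h : LD4 x < 0) : SD4 (cInvD4 x) < SD4 x := by
  simp only [LD4] at h
  show ((x 0 + x 1 + x 2 + x 3 - x 4) - x 0) + ((x 0 + x 1 + x 2 + x 3 - x 4) - x 1)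
      + ((x 0 + x 1 + x 2 + x 3 - x 4) - x 2) + ((x 0 + x 1 + x 2 + x 3 - x 4) - x 3)
      + (x 0 + x 1 + x 2 + x 3 - x 4) < x 0 + x 1 + x 2 + x 3 + x 4
  linarith

lemma funext5 (v w : Fin 5 → ℤ) (h0 : v 0 = w 0) (h1 : v 1 = w 1) (h2 : v 2 = w 2)
    (h3 : v 3 = w 3) (h4 : v 4 = w 4) : v = w := by
  funext i
  fin_cases i
  · exact h0
  · exact h1
  · exact h2
  · exact h3
  · exact h4

lemma applyWord_append (w : List Bool) (b : Bool) (x : Fin 5 → ℤ) :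
    applyWordD4 (w ++ [b]) x = applyWordD4 w ((if b then cBulletD4 else cCircD4) x) := by
  induction w with
  | nil => rfl
  | cons a w ih => simp [applyWordD4, ih]

set_option maxHeartbeats 1000000 in
/-- main induction for the word part -/
lemma word_lemma : ∀ N : ℕ, ∀ v : Fin 5 → ℤ, SD4 v ≤ N → (∀ i, 0 ≤ v i) →
    qD4 v ≤ 1 → LD4 v ≠ 0 →
    ∃ w g, applyWordD4 w v = Pi.single g 1 := by
  intro N
  induction N with
  | zero =>
    intro v hS hpos hq hL
    exfalso
    have h0 := hpos 0; have h1 := hpos 1; have h2 := hpos 2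
    have h3 := hpos 3; have h4 := hpos 4
    simp only [SD4, Nat.cast_zero] at hS
    simp only [LD4] at hL
    omega
  | succ N ih =>
    intro v hS hpos hq hL
    have h0 := hpos 0; have h1 := hpos 1; have h2 := hpos 2
    have h3 := hpos 3; have h4 := hpos 4
    simp only [SD4] at hS
    simp only [LD4] at hL
    have hq' : v 0 ^ 2 + v 1 ^ 2 + v 2 ^ 2 + v 3 ^ 2 + v 4 ^ 2
        - v 4 * (v 0 + v 1 + v 2 + v 3) ≤ 1 := by
      simpa [qD4, Fin.sum_univ_five] using hq
    rcases lt_or_gt_of_ne hL with hneg | hposL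
    · -- L < 0 : apply c∘
      by_cases hc : v 0 + v 1 + v 2 + v 3 < v 4
      · -- base case: v = e₄
        have hv4 : v 4 ≤ 1 := by
          by_contra hb
          push_neg at hb
          have hL3 : v 0 + v 1 + v 2 + v 3 - 2 * v 4 ≤ -3 := by omega
          nlinarith [sq_nonneg (v 0 - v 1), sq_nonneg (v 0 - v 2), sq_nonneg (v 0 - v 3),
            sq_nonneg (v 1 - v 2), sq_nonneg (v 1 - v 3), sq_nonneg (v 2 - v 3),
            sq_nonneg (v 0 + v 1 + v 2 + v 3 - 2 * v 4 + 3)]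
        have e0 : v 0 = 0 := by omega
        have e1 : v 1 = 0 := by omega
        have e2 : v 2 = 0 := by omega
        have e3 : v 3 = 0 := by omega
        have e4 : v 4 = 1 := by omega
        refine ⟨[], 4, ?_⟩
        show v = Pi.single 4 1
        apply funext5 <;> simp [Pi.single_apply] <;> omega
      · -- recursive case
        push_neg at hc
        set w0 := cCircD4 v with hw0
        have hw00 : w0 0 = v 0 := rfl
        have hw01 : w0 1 = v 1 := rfl
        have hw02 : w0 2 = v 2 := rfl
        have hw03 : w0 3 = v 3 := rfl
        have hw04 : w0 4 = v 0 + v 1 + v 2 + v 3 - v 4 := rfl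
        have hwpos : ∀ i, 0 ≤ w0 i := by
          intro i; fin_cases i <;> simp [hw00, hw01, hw02, hw03, hw04] <;> omega
        have hwS : SD4 w0 ≤ (N : ℤ) := by
          simp only [SD4, hw00, hw01, hw02, hw03, hw04]
          push_cast at hS ⊢
          omega
        have hwq : qD4 w0 ≤ 1 := by rw [hw0, q_circ]; exact hq
        have hwL : LD4 w0 ≠ 0 := by
          simp only [LD4, hw00, hw01, hw02, hw03, hw04]; omega
        obtain ⟨w, g, hwg⟩ := ih w0 hwS hwpos hwq hwL
        exact ⟨w ++ [false], g, by rw [applyWord_append]; simpa using hwg⟩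
    · -- L > 0 : apply c•
      by_cases hc : v 4 = 0
      · -- base case: v = eᵢ for a leaf i
        have b0 : v 0 ≤ 1 := by nlinarith [sq_nonneg (v 1), sq_nonneg (v 2), sq_nonneg (v 3)]
        have b1 : v 1 ≤ 1 := by nlinarith [sq_nonneg (v 0), sq_nonneg (v 2), sq_nonneg (v 3)]
        have b2 : v 2 ≤ 1 := by nlinarith [sq_nonneg (v 0), sq_nonneg (v 1), sq_nonneg (v 3)]
        have b3 : v 3 ≤ 1 := by nlinarith [sq_nonneg (v 0), sq_nonneg (v 1), sq_nonneg (v 2)]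
        have s0 : v 0 ^ 2 = v 0 := by rcases (by omega : v 0 = 0 ∨ v 0 = 1) with h | h <;> rw [h] <;> ring
        have s1 : v 1 ^ 2 = v 1 := by rcases (by omega : v 1 = 0 ∨ v 1 = 1) with h | h <;> rw [h] <;> ring
        have s2 : v 2 ^ 2 = v 2 := by rcases (by omega : v 2 = 0 ∨ v 2 = 1) with h | h <;> rw [h] <;> ring
        have s3 : v 3 ^ 2 = v 3 := by rcases (by omega : v 3 = 0 ∨ v 3 = 1) with h | h <;> rw [h] <;> ring
        rw [s0, s1, s2, s3, hc] at hq'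
        have hone : (v 0 = 1 ∧ v 1 = 0 ∧ v 2 = 0 ∧ v 3 = 0) ∨
            (v 1 = 1 ∧ v 0 = 0 ∧ v 2 = 0 ∧ v 3 = 0) ∨
            (v 2 = 1 ∧ v 0 = 0 ∧ v 1 = 0 ∧ v 3 = 0) ∨
            (v 3 = 1 ∧ v 0 = 0 ∧ v 1 = 0 ∧ v 2 = 0) := by omega
        rcases hone with ⟨e, f1, f2, f3⟩ | ⟨e, f1, f2, f3⟩ | ⟨e, f1, f2, f3⟩ | ⟨e, f1, f2, f3⟩
        · refine ⟨[], 0, ?_⟩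
          show v = Pi.single 0 1
          apply funext5 <;> simp [Pi.single_apply] <;> omega
        · refine ⟨[], 1, ?_⟩
          show v = Pi.single 1 1
          apply funext5 <;> simp [Pi.single_apply] <;> omega
        · refine ⟨[], 2, ?_⟩
          show v = Pi.single 2 1
          apply funext5 <;> simp [Pi.single_apply] <;> omega
        · refine ⟨[], 3, ?_⟩
          show v = Pi.single 3 1
          apply funext5 <;> simp [Pi.single_apply] <;> omega
      · -- recursive case: v 4 ≥ 1, every leaf ≤ v 4
        have hv4 : 1 ≤ v 4 := by omega
        have l0 : v 0 ≤ v 4 := by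
          by_contra hb; push_neg at hb
          nlinarith [sq_nonneg (2 * v 1 - v 4), sq_nonneg (2 * v 2 - v 4),
            sq_nonneg (2 * v 3 - v 4), sq_nonneg (2 * v 0 - v 4 - 3)]
        have l1 : v 1 ≤ v 4 := by
          by_contra hb; push_neg at hb
          nlinarith [sq_nonneg (2 * v 0 - v 4), sq_nonneg (2 * v 2 - v 4),
            sq_nonneg (2 * v 3 - v 4), sq_nonneg (2 * v 1 - v 4 - 3)]
        have l2 : v 2 ≤ v 4 := by
          by_contra hb; push_neg at hb
          nlinarith [sq_nonneg (2 * v 0 - v 4), sq_nonneg (2 * v 1 - v 4),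
            sq_nonneg (2 * v 3 - v 4), sq_nonneg (2 * v 2 - v 4 - 3)]
        have l3 : v 3 ≤ v 4 := by
          by_contra hb; push_neg at hb
          nlinarith [sq_nonneg (2 * v 0 - v 4), sq_nonneg (2 * v 1 - v 4),
            sq_nonneg (2 * v 2 - v 4), sq_nonneg (2 * v 3 - v 4 - 3)]
        set w0 := cBulletD4 v with hw0
        have hw00 : w0 0 = v 4 - v 0 := rfl
        have hw01 : w0 1 = v 4 - v 1 := rfl
        have hw02 : w0 2 = v 4 - v 2 := rfl
        have hw03 : w0 3 = v 4 - v 3 := rfl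
        have hw04 : w0 4 = v 4 := rfl
        have hwpos : ∀ i, 0 ≤ w0 i := by
          intro i; fin_cases i <;> simp [hw00, hw01, hw02, hw03, hw04] <;> omega
        have hwS : SD4 w0 ≤ (N : ℤ) := by
          simp only [SD4, hw00, hw01, hw02, hw03, hw04]
          push_cast at hS ⊢
          omega
        have hwq : qD4 w0 ≤ 1 := by rw [hw0, q_bullet]; exact hq
        have hwL : LD4 w0 ≠ 0 := by
          simp only [LD4, hw00, hw01, hw02, hw03, hw04]; omega
        obtain ⟨w, g, hwg⟩ := ih w0 hwS hwpos hwq hwL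
        exact ⟨w ++ [true], g, by rw [applyWord_append]; simpa using hwg⟩

/-- Every positive root v of D̃₄ with L(v) = v₁+v₂+v₃+v₄−2v₀ ≠ 0 is carried to a
coordinate vector by some finite composition of c• and c∘; equivalently, for some
integer t the vector cᵗ(v) fails to be componentwise nonnegative (v is singular). -/
theorem stmt19 (v : Fin 5 → ℤ) (hpos : ∀ i, 0 ≤ v i) (hne : v ≠ 0)
    (hroot : qD4 v ≤ 1) (hL : v 0 + v 1 + v 2 + v 3 - 2 * v 4 ≠ 0) :
    (∃ (w : List Bool) (g : Fin 5), applyWordD4 w v = Pi.single g 1) ∧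
    (∃ t : ℕ, (¬ ∀ i, 0 ≤ (cD4^[t] v) i) ∨ (¬ ∀ i, 0 ≤ (cInvD4^[t] v) i)) := by
  have hSpos : 0 ≤ SD4 v := by
    have h0 := hpos 0; have h1 := hpos 1; have h2 := hpos 2
    have h3 := hpos 3; have h4 := hpos 4
    simp only [SD4]; omega
  constructor
  · exact word_lemma (SD4 v).toNat v (by omega) hpos hroot hL
  · rcases lt_or_gt_of_ne hL with hneg | hposL
    · -- use cInv
      refine ⟨(SD4 v).toNat + 1, Or.inr ?_⟩
      intro hall
      have hLall : ∀ t : ℕ, LD4 (cInvD4^[t] v) = LD4 v := by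
        intro t
        induction t with
        | zero => simp
        | succ t ih2 => rw [Function.iterate_succ_apply', L_cInv, ih2]
      have key : ∀ t : ℕ, SD4 (cInvD4^[t] v) ≤ SD4 v - t := by
        intro t
        induction t with
        | zero => simp
        | succ t iht =>
          rw [Function.iterate_succ_apply']
          have := S_cInv (cInvD4^[t] v) (by rw [hLall t]; exact hneg)
          push_cast
          omega
      have hk := key ((SD4 v).toNat + 1)
      have hSn : 0 ≤ SD4 (cInvD4^[(SD4 v).toNat + 1] v) := by
        set u := cInvD4^[(SD4 v).toNat + 1] v
        have g0 := hall 0; have g1 := hall 1; have g2 := hall 2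
        have g3 := hall 3; have g4 := hall 4
        simp only [SD4]; omega
      push_cast at hk
      omega
    · -- use c
      refine ⟨(SD4 v).toNat + 1, Or.inl ?_⟩
      intro hall
      have hLall : ∀ t : ℕ, LD4 (cD4^[t] v) = LD4 v := by
        intro t
        induction t with
        | zero => simp
        | succ t ih2 => rw [Function.iterate_succ_apply', L_c, ih2]
      have key : ∀ t : ℕ, SD4 (cD4^[t] v) ≤ SD4 v - t := by
        intro t
        induction t with
        | zero => simp
        | succ t iht =>
          rw [Function.iterate_succ_apply']
          have := S_c (cD4^[t] v) (by rw [hLall t]; exact hposL)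
          push_cast
          omega
      have hk := key ((SD4 v).toNat + 1)
      have hSn : 0 ≤ SD4 (cD4^[(SD4 v).toNat + 1] v) := by
        set u := cD4^[(SD4 v).toNat + 1] v
        have g0 := hall 0; have g1 := hall 1; have g2 := hall 2
        have g3 := hall 3; have g4 := hall 4
        simp only [SD4]; omega
      push_cast at hk
      omega
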